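/- For integers k ≥ 1 and 1 ≤ m ≤ k, let y_m = 1 / (1 + (1 − 2/(2k+1))^{2m−2}) and μ_m = 1/2 − 1/(4k) + y_m/(2k). Then 1/2 ≤ μ_m ≤ 1/2 + 1/(5k). -/

import Mathlib

noncomputable section

/-- `y_m = 1 / (1 + (1 - 2/(2k+1))^(2m-2))`. -/
def yk (k m : ℕ) : ℝ := 1 / (1 + (1 - 2/(2*(k:ℝ) + 1)) ^ (2*m - 2))

/-- `μ_m = 1/2 - 1/(4k) + y_m/(2k)`, the prior of the information structure `I(m)`. -/
def muk (k m : ℕ) : ℝ := 1/2 - 1/(4*(k:ℝ)) + yk k m / (2*(k:ℝ))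

lemma key_pow (k : ℕ) (hk : 1 ≤ k) :
    (1:ℝ)/9 ≤ (1 - 2/(2*(k:ℝ) + 1)) ^ (2*k - 2) := by
  have hk1 : (1:ℝ) ≤ k := by exact_mod_cast hk
  have hden : (0:ℝ) < 2*(k:ℝ) + 1 := by linarith
  have hnum : (0:ℝ) < 2*(k:ℝ) - 1 := by linarith
  have hq : 1 - 2/(2*(k:ℝ) + 1) = (2*(k:ℝ) - 1)/(2*(k:ℝ) + 1) := by
    field_simp
    ring
  have hqpos : (0:ℝ) < 1 - 2/(2*(k:ℝ) + 1) := by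
    rw [hq]; positivity
  set q : ℝ := 1 - 2/(2*(k:ℝ) + 1) with hqdef
  -- inverse
  have hinv : 1/q = 1 + 2/(2*(k:ℝ) - 1) := by
    rw [hq]; field_simp; ring
  have hcast : ((2*k - 2 : ℕ) : ℝ) = 2*(k:ℝ) - 2 := by
    have : 2 ≤ 2*k := by omega
    push_cast [Nat.cast_sub this]
    ring
  have hexp : (1/q) ^ (2*k-2) ≤ Real.exp 2 := by
    have h1 : 1/q ≤ Real.exp (2/(2*(k:ℝ) - 1)) := by
      rw [hinv]
      have := Real.add_one_le_exp (2/(2*(k:ℝ) - 1))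
      linarith
    have h2 : (1/q)^(2*k-2) ≤ Real.exp (2/(2*(k:ℝ) - 1)) ^ (2*k-2) := by
      apply pow_le_pow_left₀ (by positivity) h1
    refine h2.trans ?_
    rw [← Real.exp_nat_mul]
    apply Real.exp_le_exp.mpr
    rw [hcast, mul_comm, div_mul_eq_mul_div, div_le_iff₀ hnum]
    linarith
  have hexp9 : Real.exp 2 < 9 := by
    have h1 : Real.exp 1 < 3 := by
      have := Real.exp_one_lt_d9
      linarith
    have : Real.exp 2 = Real.exp 1 * Real.exp 1 := by
      rw [← Real.exp_add]; norm_num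
    nlinarith [Real.exp_pos 1]
  have hqn : (0:ℝ) < q ^ (2*k-2) := pow_pos hqpos _
  have h9 : (1/q)^(2*k-2) ≤ 9 := le_of_lt (hexp.trans_lt hexp9)
  rw [div_pow, one_pow, div_le_iff₀ hqn] at h9
  rw [div_le_iff₀' (by norm_num : (0:ℝ) < 9)]
  linarith

theorem stmt_12 (k m : ℕ) (hk : 1 ≤ k) (hm : 1 ≤ m) (hmk : m ≤ k) :
    1/2 ≤ muk k m ∧ muk k m ≤ 1/2 + 1/(5*(k:ℝ)) := by
  have hk1 : (1:ℝ) ≤ k := by exact_mod_cast hk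
  have hkpos : (0:ℝ) < k := by linarith
  have hden : (0:ℝ) < 2*(k:ℝ) + 1 := by linarith
  have hqpos : (0:ℝ) < 1 - 2/(2*(k:ℝ) + 1) := by
    have : 2/(2*(k:ℝ) + 1) ≤ 2/3 := by
      apply div_le_div_of_nonneg_left (by norm_num) (by norm_num) (by linarith)
    linarith
  have hqle1 : 1 - 2/(2*(k:ℝ) + 1) ≤ 1 := by
    have : 0 < 2/(2*(k:ℝ) + 1) := by positivity
    linarith
  set q : ℝ := 1 - 2/(2*(k:ℝ) + 1) with hqdef
  have hqm_pos : (0:ℝ) < q ^ (2*m-2) := pow_pos hqpos _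
  have hqm_le1 : q ^ (2*m-2) ≤ 1 := pow_le_one₀ (le_of_lt hqpos) hqle1
  have hlow : (1:ℝ)/9 ≤ q ^ (2*m-2) := by
    have h1 := key_pow k hk
    have h2 : q ^ (2*k-2) ≤ q ^ (2*m-2) :=
      pow_le_pow_of_le_one (le_of_lt hqpos) hqle1 (by omega)
    exact le_trans h1 h2
  have hy_def : yk k m = 1 / (1 + q ^ (2*m-2)) := rfl
  have hsum_pos : (0:ℝ) < 1 + q ^ (2*m-2) := by linarith
  have hy_lb : (1:ℝ)/2 ≤ yk k m := by
    rw [hy_def]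
    rw [div_le_div_iff₀ (by norm_num) hsum_pos]
    linarith
  have hy_ub : yk k m ≤ 9/10 := by
    rw [hy_def]
    rw [div_le_div_iff₀ hsum_pos (by norm_num)]
    linarith
  constructor
  · unfold muk
    have h1 : (1:ℝ)/2 / (2*(k:ℝ)) ≤ yk k m / (2*(k:ℝ)) := by
      gcongr
    have h2 : (1:ℝ)/2 / (2*(k:ℝ)) = 1/(4*(k:ℝ)) := by
      field_simp; ring
    linarith
  · unfold muk
    have h1 : yk k m / (2*(k:ℝ)) ≤ (9/10) / (2*(k:ℝ)) := by
      gcongr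
    have h2 : -(1/(4*(k:ℝ))) + (9/10) / (2*(k:ℝ)) = 1/(5*(k:ℝ)) := by
      field_simp; ring
    linarith
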